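/- Let G be a finite simple undirected graph and e = {a,b} an edge of G that is not a bridge (i.e., a and b are still connected in G−e). Then for every vertex v, c_{G−e}(v) ≥ c_G(v), where c_H(v) := P(H) − P(H∖{v}). -/

import Mathlib

/-- Total pairwise connectivity: the number of unordered pairs of distinct vertices
joined by a path. -/
noncomputable def pairConn {V : Type*} [Fintype V] (G : SimpleGraph V) : ℕ :=
  {p : Sym2 V | ¬ p.IsDiag ∧
    p ∈ Sym2.fromRel (r := G.Reachable) ⟨fun _ _ h => h.symm⟩}.ncard

/-- Deleting a set of vertices from a simple graph (modelled by isolating them,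
which leaves the pairwise connectivity among the remaining vertices unchanged and
contributes no connected pairs). -/
def SimpleGraph.vdel {V : Type*} (G : SimpleGraph V) (S : Set V) : SimpleGraph V where
  Adj a b := G.Adj a b ∧ a ∉ S ∧ b ∉ S
  symm := ⟨fun a b ⟨h, ha, hb⟩ => ⟨h.symm, hb, ha⟩⟩
  loopless := ⟨fun a ⟨h, _, _⟩ => G.loopless.irrefl a h⟩

/-- Pairwise connectivity score of a vertex: `c(v) = P(G) - P(G \ {v})`. -/
noncomputable def cscore {V : Type*} [Fintype V] (G : SimpleGraph V) (v : V) : ℕ :=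
  pairConn G - pairConn (G.vdel {v})

lemma pairConn_mono {V : Type*} [Fintype V] {H G : SimpleGraph V} (h : H ≤ G) :
    pairConn H ≤ pairConn G := by
  apply Set.ncard_le_ncard _ (Set.toFinite _)
  intro p hp
  induction p using Sym2.ind with
  | _ x y =>
    obtain ⟨hd, hr⟩ := hp
    refine ⟨hd, ?_⟩
    rw [Sym2.fromRel_prop]
    exact hr.mono h

lemma reach_del {V : Type*} (G : SimpleGraph V) (a b : V)
    (hnb : (G.deleteEdges {s(a, b)}).Reachable a b) {x y : V}
    (h : G.Reachable x y) : (G.deleteEdges {s(a, b)}).Reachable x y := by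
  obtain ⟨w⟩ := h
  induction w with
  | nil => exact SimpleGraph.Reachable.refl _
  | @cons u v y h p ih =>
    refine SimpleGraph.Reachable.trans ?_ ih
    by_cases hc : s(u, v) = s(a, b)
    · rw [Sym2.eq_iff] at hc
      rcases hc with ⟨rfl, rfl⟩ | ⟨rfl, rfl⟩
      · exact hnb
      · exact hnb.symm
    · exact SimpleGraph.Adj.reachable (by rw [SimpleGraph.deleteEdges_adj]; exact ⟨h, by simpa using hc⟩)

theorem cscore_mono_of_nonbridge {V : Type*} [Fintype V]
    (G : SimpleGraph V) (a b : V) (hab : G.Adj a b)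
    (hnb : (G.deleteEdges {s(a, b)}).Reachable a b) :
    ∀ v : V, cscore G v ≤ cscore (G.deleteEdges {s(a, b)}) v := by
  intro v
  have h1 : pairConn (G.deleteEdges {s(a, b)}) = pairConn G := by
    unfold pairConn
    congr 1
    ext p
    induction p using Sym2.ind with
    | _ x y =>
      simp only [Set.mem_setOf_eq, Sym2.fromRel_prop]
      refine and_congr_right fun _ => ⟨fun hr => hr.mono (SimpleGraph.deleteEdges_le _),
        fun hr => reach_del G a b hnb hr⟩
  have hle : (G.deleteEdges {s(a, b)}).vdel {v} ≤ G.vdel {v} := by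
    intro x y hxy
    exact ⟨hxy.1.1, hxy.2.1, hxy.2.2⟩
  have h2 : pairConn ((G.deleteEdges {s(a, b)}).vdel {v}) ≤ pairConn (G.vdel {v}) :=
    pairConn_mono hle
  unfold cscore
  rw [h1]
  exact Nat.sub_le_sub_left h2 _
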